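/- The Möbius function of any finite join-distributive lattice takes values only in {-1, 0, 1}. In particular, for any interval [x, y] in such a lattice, μ(x, y) ∈ {-1, 0, 1}. -/

import Mathlib

set_option linter.unusedSectionVars false

/-- A lattice is meet-semidistributive if `p ⊓ q = p ⊓ r` implies `p ⊓ q = p ⊓ (q ⊔ r)`. -/
def MeetSemidistrib (α : Type*) [Lattice α] : Prop :=
  ∀ p q r : α, p ⊓ q = p ⊓ r → p ⊓ q = p ⊓ (q ⊔ r)

/-- A lattice is upper semimodular if whenever `p ⊓ q` is covered by both `p` and `q`,
then `p ⊔ q` covers both `p` and `q`. -/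
def UpperSemimodular (α : Type*) [Lattice α] : Prop :=
  ∀ p q : α, (p ⊓ q) ⋖ p → (p ⊓ q) ⋖ q → (p ⋖ (p ⊔ q) ∧ q ⋖ (p ⊔ q))


open Finset IncidenceAlgebra

section JD
variable {α : Type*} [Lattice α] [Fintype α] [DecidableEq α] [LocallyFiniteOrder α]

/-- join of `x` with all elements of `S` -/
def jsup (x : α) (S : Finset α) : α := S.fold (· ⊔ ·) x id

@[simp] lemma jsup_empty (x : α) : jsup x ∅ = x := rfl

lemma jsup_insert (x a : α) (S : Finset α) : jsup x (insert a S) = a ⊔ jsup x S :=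
  Finset.fold_insert_idem

lemma le_jsup_self (x : α) (S : Finset α) : x ≤ jsup x S := by
  classical
  induction S using Finset.induction_on with
  | empty => simp
  | @insert _ _ h ih => rw [jsup_insert]; exact ih.trans le_sup_right

lemma le_jsup_of_mem {x a : α} {S : Finset α} (h : a ∈ S) : a ≤ jsup x S := by
  classical
  induction S using Finset.induction_on with
  | empty => simp at h
  | @insert b T hb ih =>
    rw [jsup_insert]
    rcases Finset.mem_insert.1 h with rfl | h
    · exact le_sup_left
    · exact (ih h).trans le_sup_right

lemma jsup_le {x z : α} {S : Finset α} (hx : x ≤ z) (h : ∀ a ∈ S, a ≤ z) : jsup x S ≤ z := by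
  classical
  induction S using Finset.induction_on with
  | empty => simpa
  | @insert b T hb ih =>
    rw [jsup_insert]
    exact sup_le (h b (Finset.mem_insert_self b T))
      (ih fun a ha => h a (Finset.mem_insert_of_mem ha))

open Classical in
/-- the atoms of the interval `[x, y]`, i.e. elements of the interval covering `x`. -/
noncomputable def atomsOf (x y : α) : Finset α := (Finset.Icc x y).filter (fun a => x ⋖ a)

lemma mem_atomsOf {x y a : α} : a ∈ atomsOf x y ↔ a ≤ y ∧ x ⋖ a := by
  classical
  simp only [atomsOf, Finset.mem_filter, Finset.mem_Icc]
  constructor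
  · rintro ⟨⟨-, h2⟩, h3⟩; exact ⟨h2, h3⟩
  · rintro ⟨h1, h2⟩; exact ⟨⟨h2.le, h1⟩, h2⟩

lemma eq_of_covby_of_lt_le {x c a : α} (h : x ⋖ a) (hc : x < c) (hca : c ≤ a) : c = a :=
  (lt_or_eq_of_le hca).resolve_left (h.2 hc)

lemma inf_eq_of_covby_not_le {x c z : α} (h : x ⋖ c) (hxz : x ≤ z) (hcz : ¬ c ⊓ z = c) :
    c ⊓ z = x := by
  have hx : x ≤ c ⊓ z := le_inf h.le hxz
  rcases hx.lt_or_eq with hlt | he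
  · exact absurd (eq_of_covby_of_lt_le h hlt inf_le_left) hcz
  · exact he.symm

lemma inf_eq_of_covby_not_le' {x c z : α} (h : x ⋖ c) (hxz : x ≤ z) (hcz : ¬ c ≤ z) :
    c ⊓ z = x :=
  inf_eq_of_covby_not_le h hxz (fun he => hcz (by rw [← he]; exact inf_le_right))

lemma atom_inf {x a b : α} (h1 : x ⋖ a) (h2 : x ⋖ b) (hne : a ≠ b) : a ⊓ b = x := by
  refine inf_eq_of_covby_not_le' h1 h2.le ?_
  intro hab
  exact hne (eq_of_covby_of_lt_le h2 h1.lt hab)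


lemma lemA (husm : UpperSemimodular α) {u v : α} (huv : u ⋖ v) :
    ∀ n (p : α), (Finset.Icc u p).card ≤ n → u ≤ p → ¬ v ≤ p → p ⋖ p ⊔ v := by
  intro n
  induction n with
  | zero =>
    intro p hcard hup _
    exact absurd (Finset.card_pos.2 ⟨u, Finset.mem_Icc.2 ⟨le_rfl, hup⟩⟩) (by omega)
  | succ n ih =>
    intro p hcard hup hvp
    rcases hup.lt_or_eq with hlt | rfl
    swap
    · simpa [sup_eq_right.2 huv.le] using huv
    obtain ⟨p', hup', hp'p⟩ := exists_le_covBy_of_lt hlt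
    have hvp' : ¬ v ≤ p' := fun h => hvp (h.trans hp'p.le)
    have hcard' : (Finset.Icc u p').card ≤ n := by
      have hss : Finset.Icc u p' ⊂ Finset.Icc u p := by
        refine ⟨Finset.Icc_subset_Icc_right hp'p.le, fun hsub => ?_⟩
        have := Finset.mem_Icc.1 (hsub (Finset.mem_Icc.2 ⟨hup'.trans hp'p.le, le_rfl⟩))
        exact absurd this.2 (not_le_of_gt hp'p.lt)
      have := Finset.card_lt_card hss
      omega
    have hcov' : p' ⋖ p' ⊔ v := ih p' hcard' hup' hvp'
    have hmeet : p ⊓ (p' ⊔ v) = p' := by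
      have h1 : p' ≤ p ⊓ (p' ⊔ v) := le_inf hp'p.le le_sup_left
      rcases h1.lt_or_eq with h2 | h2
      · exfalso
        have h3 : p ⊓ (p' ⊔ v) = p := eq_of_covby_of_lt_le hp'p h2 inf_le_left
        have h4 : p ≤ p' ⊔ v := by rw [← h3]; exact inf_le_right
        have h5 : p ≠ p' ⊔ v := fun he => hvp (he ▸ le_sup_right)
        exact hcov'.2 hp'p.lt (h4.lt_of_ne h5)
      · exact h2.symm
    have hBi := husm p (p' ⊔ v) (by rw [hmeet]; exact hp'p) (by rw [hmeet]; exact hcov')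
    have : p ⊔ (p' ⊔ v) = p ⊔ v := by
      rw [← sup_assoc, sup_eq_left.2 hp'p.le]
    rw [this] at hBi
    exact hBi.1

lemma lemA' (husm : UpperSemimodular α) {u v p : α} (huv : u ⋖ v) (hup : u ≤ p)
    (hvp : ¬ v ≤ p) : p ⋖ p ⊔ v :=
  lemA husm huv (Finset.Icc u p).card p le_rfl hup hvp

lemma inf_jsup (hmsd : MeetSemidistrib α) {a x : α} (hax : x ≤ a) (S : Finset α)
    (h : ∀ s ∈ S, a ⊓ s = x) : a ⊓ jsup x S = x := by
  classical
  induction S using Finset.induction_on with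
  | empty => simpa using inf_eq_right.2 hax
  | @insert s T hs ih =>
    have h1 : a ⊓ jsup x T = x := ih fun t ht => h t (Finset.mem_insert_of_mem ht)
    have h2 : a ⊓ s = x := h s (Finset.mem_insert_self s T)
    have := hmsd a (jsup x T) s (h1.trans h2.symm)
    rw [jsup_insert, sup_comm s (jsup x T)]
    rw [h1] at this
    exact this.symm


lemma claimB (hmsd : MeetSemidistrib α) (husm : UpperSemimodular α) {x y : α}
    (hy : jsup x (atomsOf x y) = y) :
    ∀ n (z : α), (Finset.Icc z y).card ≤ n → x ≤ z → z ≤ y → jsup x (atomsOf x z) = z := by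
  intro n
  induction n with
  | zero =>
    intro z hcard _ hzy
    exact absurd (Finset.card_pos.2 ⟨z, Finset.mem_Icc.2 ⟨le_rfl, hzy⟩⟩) (by omega)
  | succ n ih =>
    intro z hcard hxz hzy
    by_cases hyz : y ≤ z
    · have : z = y := le_antisymm hzy hyz
      subst this; exact hy
    obtain ⟨a, ha, haz⟩ : ∃ a ∈ atomsOf x y, ¬ a ≤ z := by
      by_contra hcon
      push_neg at hcon
      exact hyz (hy ▸ jsup_le hxz hcon)
    obtain ⟨hay, hxa⟩ := mem_atomsOf.1 ha
    have hz₁y : z ⊔ a ≤ y := sup_le hzy hay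
    have hzz₁ : z < z ⊔ a := lt_of_le_of_ne le_sup_left
      (fun h => haz (h ▸ le_sup_right))
    have hcard' : (Finset.Icc (z ⊔ a) y).card ≤ n := by
      have hss : Finset.Icc (z ⊔ a) y ⊂ Finset.Icc z y := by
        refine ⟨Finset.Icc_subset_Icc_left hzz₁.le, fun hsub => ?_⟩
        have := Finset.mem_Icc.1 (hsub (Finset.mem_Icc.2 ⟨le_rfl, hzy⟩))
        exact absurd this.1 (not_le_of_gt hzz₁)
      have := Finset.card_lt_card hss
      omega
    have h1 : jsup x (atomsOf x (z ⊔ a)) = z ⊔ a :=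
      ih (z ⊔ a) hcard' (hxz.trans le_sup_left) hz₁y
    have key : ∀ c ∈ atomsOf x (z ⊔ a), c ≠ a → c ≤ z := by
      intro c hc hca
      by_contra hcz
      obtain ⟨hc1, hxc⟩ := mem_atomsOf.1 hc
      have h2 : c ⊓ z = x := inf_eq_of_covby_not_le' hxc hxz hcz
      have h3 : c ⊓ a = x := atom_inf hxc hxa hca
      have h4 := hmsd c z a (h2.trans h3.symm)
      rw [h2, inf_eq_left.2 hc1] at h4
      exact hxc.lt.ne h4
    have hsub : atomsOf x (z ⊔ a) = insert a (atomsOf x z) := by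
      ext c
      simp only [Finset.mem_insert, mem_atomsOf]
      constructor
      · rintro ⟨hc1, hxc⟩
        rcases eq_or_ne c a with rfl | hca
        · exact Or.inl rfl
        · exact Or.inr ⟨key c (mem_atomsOf.2 ⟨hc1, hxc⟩) hca, hxc⟩
      · rintro (rfl | ⟨hc1, hxc⟩)
        · exact ⟨le_sup_right, hxa⟩
        · exact ⟨hc1.trans le_sup_left, hxc⟩
    set u := jsup x (atomsOf x z) with hu_def
    have hu : u ≤ z := jsup_le hxz fun c hc => (mem_atomsOf.1 hc).1
    have h4 : z ⊔ a = a ⊔ u := by rw [← h1, hsub, jsup_insert]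
    have hau : ¬ a ≤ u := fun h => haz (h.trans hu)
    have h5 : u ⋖ u ⊔ a := lemA' husm hxa (le_jsup_self x _) hau
    rcases hu.lt_or_eq with h6 | h6
    · exfalso
      have : z < u ⊔ a := by rw [sup_comm u a, ← h4]; exact hzz₁
      exact h5.2 h6 this
    · exact h6


lemma weisner {x y a : α} (hxa : x < a) (hay : a ≤ y) :
    ∑ z ∈ (Finset.Icc x y).filter (fun z => z ⊔ a = y), mu ℤ x z = 0 := by
  classical
  calc
    ∑ z ∈ (Finset.Icc x y).filter (fun z => z ⊔ a = y), mu ℤ x z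
        = ∑ z ∈ Finset.Icc x y, if z ⊔ a = y then mu ℤ x z else 0 := Finset.sum_filter _ _
    _ = ∑ z ∈ Finset.Icc x y, ∑ w ∈ Finset.Icc (z ⊔ a) y, mu ℤ x z * mu ℤ w y := by
        refine Finset.sum_congr rfl fun z hz => ?_
        rw [← Finset.mul_sum, sum_Icc_mu_left, mul_ite, mul_one, mul_zero]
    _ = ∑ z ∈ Finset.Icc x y, ∑ w ∈ Finset.Icc x y,
          if z ≤ w ∧ a ≤ w then mu ℤ x z * mu ℤ w y else 0 := by
        refine Finset.sum_congr rfl fun z hz => ?_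
        rw [← Finset.sum_filter]
        apply Finset.sum_congr ?_ fun _ _ => rfl
        ext w
        simp only [Finset.mem_Icc, Finset.mem_filter, sup_le_iff]
        obtain ⟨hxz, hzy⟩ := Finset.mem_Icc.1 hz
        constructor
        · rintro ⟨⟨h1, h2⟩, h3⟩; exact ⟨⟨hxz.trans h1, h3⟩, h1, h2⟩
        · rintro ⟨⟨-, h3⟩, h1, h2⟩; exact ⟨⟨h1, h2⟩, h3⟩
    _ = ∑ w ∈ Finset.Icc x y, ∑ z ∈ Finset.Icc x y,
          if z ≤ w ∧ a ≤ w then mu ℤ x z * mu ℤ w y else 0 := Finset.sum_comm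
    _ = 0 := ?_
  refine Finset.sum_eq_zero fun w hw => ?_
  obtain ⟨hxw, hwy⟩ := Finset.mem_Icc.1 hw
  by_cases haw : a ≤ w
  · have heq : ∀ z ∈ Finset.Icc x y, (if z ≤ w ∧ a ≤ w then mu ℤ x z * mu ℤ w y else 0)
        = (if z ≤ w then mu ℤ x z else 0) * mu ℤ w y := by
      intro z hz
      simp only [haw, and_true]
      rw [ite_mul, zero_mul]
    rw [Finset.sum_congr rfl heq, ← Finset.sum_mul, ← Finset.sum_filter]
    have hfe : (Finset.Icc x y).filter (fun z => z ≤ w) = Finset.Icc x w := by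
      ext z; simp only [Finset.mem_filter, Finset.mem_Icc]
      constructor
      · rintro ⟨⟨h1, -⟩, h2⟩; exact ⟨h1, h2⟩
      · rintro ⟨h1, h2⟩; exact ⟨⟨h1, h2.trans hwy⟩, h2⟩
    rw [hfe, sum_Icc_mu_right, if_neg, zero_mul]
    rintro rfl
    exact absurd haw (not_le_of_gt hxa)
  · exact Finset.sum_eq_zero fun z hz => if_neg (by tauto)


lemma card_Icc_lt_of_lt {x z y : α} (hxz : x ≤ z) (hzy : z < y) :
    (Finset.Icc x z).card < (Finset.Icc x y).card := by
  refine Finset.card_lt_card ⟨Finset.Icc_subset_Icc_right hzy.le, fun hsub => ?_⟩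
  have := (Finset.mem_Icc.1 (hsub (Finset.mem_Icc.2 ⟨hxz.trans hzy.le, le_rfl⟩))).2
  exact absurd this (not_le_of_gt hzy)

lemma muZ : ∀ n (x y : α), (Finset.Icc x y).card ≤ n → x < y →
    jsup x (atomsOf x y) ≠ y → mu ℤ x y = 0 := by
  classical
  intro n
  induction n with
  | zero =>
    intro x y hcard hxy _
    exact absurd (Finset.card_pos.2 ⟨x, Finset.mem_Icc.2 ⟨le_rfl, hxy.le⟩⟩) (by omega)
  | succ n ih =>
    intro x y hcard hxy ht
    set t := jsup x (atomsOf x y) with ht_def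
    have hty : t ≤ y := jsup_le hxy.le fun c hc => (mem_atomsOf.1 hc).1
    have ht' : t < y := hty.lt_of_ne ht
    obtain ⟨a, hxa, hay⟩ : ∃ a, x ⋖ a ∧ a ≤ y := exists_covBy_le_of_lt hxy
    have hat : a ≤ t := le_jsup_of_mem (mem_atomsOf.2 ⟨hay, hxa⟩)
    have hxt : x < t := lt_of_lt_of_le hxa.lt hat
    have hW := weisner (y := y) hxt hty
    have hyin : y ∈ (Finset.Icc x y).filter (fun z => z ⊔ t = y) :=
      Finset.mem_filter.2 ⟨Finset.mem_Icc.2 ⟨hxy.le, le_rfl⟩, sup_eq_left.2 hty⟩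
    have hrest : ∀ z ∈ (Finset.Icc x y).filter (fun z => z ⊔ t = y), z ≠ y → mu ℤ x z = 0 := by
      intro z hz hzy
      obtain ⟨hzI, hzt⟩ := Finset.mem_filter.1 hz
      obtain ⟨hxz, hzy'⟩ := Finset.mem_Icc.1 hzI
      have hzlt : z < y := hzy'.lt_of_ne hzy
      have hxz' : x < z := by
        rcases hxz.lt_or_eq with h | h
        · exact h
        · exfalso
          rw [← h, sup_eq_right.2 hxt.le] at hzt
          exact ht'.ne hzt
      have htz : jsup x (atomsOf x z) ≠ z := by
        intro hcon
        have h1 : jsup x (atomsOf x z) ≤ t := by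
          refine jsup_le hxt.le fun c hc => le_jsup_of_mem ?_
          exact mem_atomsOf.2 ⟨(mem_atomsOf.1 hc).1.trans hzy', (mem_atomsOf.1 hc).2⟩
        rw [hcon] at h1
        rw [sup_eq_right.2 h1] at hzt
        exact ht'.ne hzt
      have hcard' : (Finset.Icc x z).card ≤ n := by
        have := card_Icc_lt_of_lt hxz hzlt
        omega
      exact ih x z hcard' hxz' htz
    rw [Finset.sum_eq_single_of_mem y hyin (fun z hz hne => hrest z hz hne)] at hW
    exact hW


lemma muB (hmsd : MeetSemidistrib α) (husm : UpperSemimodular α) :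
    ∀ n (x y : α), (Finset.Icc x y).card ≤ n → x ≤ y →
    jsup x (atomsOf x y) = y → mu ℤ x y = (-1) ^ (atomsOf x y).card := by
  classical
  intro n
  induction n with
  | zero =>
    intro x y hcard hxy _
    exact absurd (Finset.card_pos.2 ⟨x, Finset.mem_Icc.2 ⟨le_rfl, hxy⟩⟩) (by omega)
  | succ n ih =>
    intro x y hcard hxy hy
    rcases hxy.lt_or_eq with hlt | rfl
    swap
    · have hempty : atomsOf x x = ∅ := by
        ext c
        simp only [mem_atomsOf, Finset.notMem_empty, iff_false, not_and]
        intro hcx hxc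
        exact absurd (hxc.lt.trans_le hcx) (lt_irrefl x)
      rw [hempty]
      simp
    have hCne : (atomsOf x y).Nonempty := by
      rcases Finset.eq_empty_or_nonempty (atomsOf x y) with he | hne
      · rw [he] at hy
        simp only [jsup_empty] at hy
        exact absurd hy hlt.ne
      · exact hne
    obtain ⟨a, ha⟩ := hCne
    obtain ⟨hay, hxa⟩ := mem_atomsOf.1 ha
    set S := (atomsOf x y).erase a with hS_def
    set z₀ := jsup x S with hz₀_def
    have hxz₀ : x ≤ z₀ := le_jsup_self x S
    have hz₀y : z₀ ≤ y := jsup_le hlt.le fun c hc =>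
      (mem_atomsOf.1 (Finset.mem_of_mem_erase hc)).1
    have hinf : a ⊓ z₀ = x := by
      refine inf_jsup hmsd hxa.le S fun s hs => ?_
      exact atom_inf hxa (mem_atomsOf.1 (Finset.mem_of_mem_erase hs)).2
        (Ne.symm (Finset.ne_of_mem_erase hs))
    have haz₀ : ¬ a ≤ z₀ := by
      intro h
      rw [inf_eq_left.2 h] at hinf
      exact hxa.lt.ne' hinf
    have hz₀a : z₀ ⊔ a = y := by
      rw [sup_comm, ← jsup_insert, hS_def, Finset.insert_erase ha, hy]
    have hcov : z₀ ⋖ y := by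
      have := lemA' husm hxa hxz₀ haz₀
      rwa [hz₀a] at this
    -- atoms of [x, z₀] are exactly S
    have hAz₀ : atomsOf x z₀ = S := by
      ext c
      simp only [hS_def, Finset.mem_erase, mem_atomsOf]
      constructor
      · rintro ⟨hcz, hxc⟩
        exact ⟨fun h => haz₀ (h ▸ hcz), hcz.trans hz₀y, hxc⟩
      · rintro ⟨hca, hcy, hxc⟩
        exact ⟨le_jsup_of_mem (Finset.mem_erase.2 ⟨hca, mem_atomsOf.2 ⟨hcy, hxc⟩⟩), hxc⟩
    -- uniqueness
    have huniq : ∀ z, z ∈ (Finset.Icc x y).filter (fun z => z ⊔ a = y) → z ≠ y → z = z₀ := by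
      intro z hz hne
      obtain ⟨hzI, hza⟩ := Finset.mem_filter.1 hz
      obtain ⟨hxz, hzy⟩ := Finset.mem_Icc.1 hzI
      have haz : ¬ a ≤ z := by
        intro h
        rw [sup_eq_left.2 h] at hza
        exact hne hza
      have hBz : jsup x (atomsOf x z) = z :=
        claimB hmsd husm hy (Finset.Icc z y).card z le_rfl hxz hzy
      have hAz : atomsOf x z = S := by
        ext c
        simp only [hS_def, Finset.mem_erase, mem_atomsOf]
        constructor
        · rintro ⟨hcz, hxc⟩
          exact ⟨fun h => haz (h ▸ hcz), hcz.trans hzy, hxc⟩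
        · rintro ⟨hca, hcy, hxc⟩
          by_contra hcon
          simp only [not_and] at hcon
          have hcz : ¬ c ≤ z := by
            intro h; exact hcon h hxc
          have h2 : c ⊓ z = x := inf_eq_of_covby_not_le' hxc hxz hcz
          have h3 : c ⊓ a = x := atom_inf hxc hxa hca
          have h4 := hmsd c z a (h2.trans h3.symm)
          rw [h2, hza, inf_eq_left.2 hcy] at h4
          exact hxc.lt.ne h4
      rw [← hBz, hAz]
    -- Weisner
    have hW := weisner (y := y) hxa.lt hay
    have hset : (Finset.Icc x y).filter (fun z => z ⊔ a = y) = {y, z₀} := by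
      ext z
      simp only [Finset.mem_insert, Finset.mem_singleton]
      constructor
      · intro hz
        rcases eq_or_ne z y with rfl | hne
        · exact Or.inl rfl
        · exact Or.inr (huniq z hz hne)
      · rintro (rfl | rfl)
        · exact Finset.mem_filter.2 ⟨Finset.mem_Icc.2 ⟨hlt.le, le_rfl⟩, sup_eq_left.2 hay⟩
        · exact Finset.mem_filter.2 ⟨Finset.mem_Icc.2 ⟨hxz₀, hz₀y⟩, hz₀a⟩
    rw [hset, Finset.sum_pair (Ne.symm hcov.lt.ne)] at hW
    have hih : mu ℤ x z₀ = (-1) ^ S.card := by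
      have hcard' : (Finset.Icc x z₀).card ≤ n := by
        have := card_Icc_lt_of_lt hxz₀ hcov.lt
        omega
      have := ih x z₀ hcard' hxz₀ (by rw [hAz₀])
      rwa [hAz₀] at this
    have hcardS : S.card + 1 = (atomsOf x y).card := Finset.card_erase_add_one ha
    have : mu ℤ x y = -(-1) ^ S.card := by
      rw [hih] at hW
      linear_combination hW
    rw [this, ← hcardS, pow_succ]
    ring

end JD

/-- The Möbius function of a finite join-distributive lattice takes values only in
`{-1, 0, 1}`. -/
theorem stmt4 {α : Type*} [Lattice α] [Fintype α] [DecidableEq α] [LocallyFiniteOrder α]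
    (hmsd : MeetSemidistrib α) (husm : UpperSemimodular α)
    (x y : α) (hxy : x ≤ y) :
    IncidenceAlgebra.mu ℤ x y ∈ ({-1, 0, 1} : Set ℤ) := by
  classical
  rcases hxy.lt_or_eq with hlt | rfl
  swap
  · simp
  by_cases h : jsup x (atomsOf x y) = y
  · rw [muB hmsd husm (Finset.Icc x y).card x y le_rfl hlt.le h]
    rcases Nat.even_or_odd (atomsOf x y).card with he | ho
    · rw [he.neg_one_pow]; simp
    · rw [ho.neg_one_pow]; simp
  · rw [muZ (Finset.Icc x y).card x y le_rfl hlt h]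
    simp
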